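/- Characterising angles: let n ≥ 1 and let P, Q be n-dimensional linear subspaces of ℝ^{2n}. Then there exists an orthonormal basis e₁, …, e_{2n} of ℝ^{2n} and angles θ₁, …, θₙ with 0 ≤ θ₁ ≤ … ≤ θ_{n−1} ≤ π/2 and θ_{n−1} ≤ θₙ ≤ π − θ_{n−1}, such that P = span{e₁, …, eₙ} and Q = span{cos θ₁ · e₁ + sin θ₁ · e_{n+1}, …, cos θₙ · eₙ + sin θₙ · e_{2n}}. -/

import Mathlib

open Real
open RealInnerProductSpace

set_option maxHeartbeats 2000000 in
/-- **Characterising angles of a pair of `n`-planes in `ℝ^{2n}`.**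
Given `n`-dimensional subspaces `P, Q` of `ℝ^{2n}`, there is an orthonormal basis
`e₁, …, e_{2n}` of `ℝ^{2n}` and angles `θ₁, …, θₙ` with
`0 ≤ θ₁ ≤ ⋯ ≤ θ_{n-1} ≤ π/2` and `θ_{n-1} ≤ θₙ ≤ π - θ_{n-1}` such that
`P = span{e₁, …, eₙ}` and `Q = span{cos θⱼ • eⱼ + sin θⱼ • e_{n+j}}`. -/
theorem characterising_angles {n : ℕ} (hn : 1 ≤ n)
    (P Q : Submodule ℝ (EuclideanSpace ℝ (Fin (2 * n))))
    (hP : Module.finrank ℝ P = n) (hQ : Module.finrank ℝ Q = n) :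
    ∃ (e : Fin (2 * n) → EuclideanSpace ℝ (Fin (2 * n))) (θ : Fin n → ℝ),
      Orthonormal ℝ e ∧
      Submodule.span ℝ (Set.range e) = ⊤ ∧
      (∀ j : Fin n, 0 ≤ θ j ∧ θ j ≤ π) ∧
      (∀ i j : Fin n, i ≤ j → (j : ℕ) + 2 ≤ n → θ i ≤ θ j) ∧
      (∀ j : Fin n, (j : ℕ) + 2 ≤ n →
        θ j ≤ π / 2 ∧ θ j ≤ θ ⟨n - 1, by omega⟩ ∧ θ ⟨n - 1, by omega⟩ ≤ π - θ j) ∧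
      P = Submodule.span ℝ
        (Set.range (fun j : Fin n => e ⟨(j : ℕ), by have := j.isLt; omega⟩)) ∧
      Q = Submodule.span ℝ
        (Set.range (fun j : Fin n =>
          Real.cos (θ j) • e ⟨(j : ℕ), by have := j.isLt; omega⟩ +
          Real.sin (θ j) • e ⟨n + (j : ℕ), by have := j.isLt; omega⟩)) := by

  classical
  set V := EuclideanSpace ℝ (Fin (2 * n)) with hVdef
  have hVrank : Module.finrank ℝ V = 2 * n := finrank_euclideanSpace_fin
  -- helper: projection inner product
  have proj_inner : ∀ (K : Submodule ℝ V) (x w : V), w ∈ K →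
      ⟪(Submodule.orthogonalProjectionOnto K x : V), w⟫ = ⟪x, w⟫ := by
    intro K x w hw
    have h0 := Submodule.starProjection_inner_eq_zero (K := K) x w hw
    change ⟪x - (Submodule.orthogonalProjectionOnto K x : V), w⟫ = 0 at h0
    rw [inner_sub_left] at h0
    linarith
  set pq : V →L[ℝ] V := Q.subtypeL ∘L Submodule.orthogonalProjectionOnto Q with hpqdef
  have pq_apply : ∀ x, pq x = (Submodule.orthogonalProjectionOnto Q x : V) := fun x => rfl
  have pq_mem : ∀ x, pq x ∈ Q := fun x => (Submodule.orthogonalProjectionOnto Q x).2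
  have pq_inner : ∀ x w, w ∈ Q → ⟪pq x, w⟫ = ⟪x, w⟫ := by
    intro x w hw; rw [pq_apply]; exact proj_inner Q x w hw
  have pq_sym : ∀ x y, ⟪pq x, y⟫ = ⟪x, pq y⟫ := by
    intro x y; rw [pq_apply, pq_apply]; exact Submodule.inner_starProjection_left_eq_right Q x y
  have pq_id : ∀ x ∈ Q, pq x = x := by
    intro x hx; rw [pq_apply]; exact Submodule.starProjection_eq_self_iff.mpr hx
  clear_value pq
  -- Stage A: eigen-data
  have stageA : ∃ (e : Fin n → V) (μ : Fin n → ℝ),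
      Orthonormal ℝ e ∧ Submodule.span ℝ (Set.range e) = P ∧
      (∀ i j : Fin n, i ≤ j → μ j ≤ μ i) ∧
      (∀ i j, ⟪pq (e i), e j⟫ = if i = j then μ i else 0) := by
    set T : P →ₗ[ℝ] P :=
      (Submodule.orthogonalProjectionOnto P).toLinearMap ∘ₗ (pq.toLinearMap ∘ₗ P.subtype) with hTdef
    have T_apply : ∀ x : P, T x = Submodule.orthogonalProjectionOnto P (pq (x : V)) := fun _ => rfl
    have hTsym : T.IsSymmetric := by
      intro x y
      have h1 : ⟪T x, y⟫ = ⟪pq (x : V), (y : V)⟫ := by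
        rw [T_apply, Submodule.coe_inner]
        exact proj_inner P (pq (x : V)) (y : V) y.2
      have h2 : ⟪x, T y⟫ = ⟪(x : V), pq (y : V)⟫ := by
        rw [real_inner_comm, T_apply, Submodule.coe_inner,
          proj_inner P (pq (y : V)) (x : V) x.2, real_inner_comm]
      rw [h1, h2, pq_sym]
    set b0 := hTsym.eigenvectorBasis hP with hb0def
    set μ0 := hTsym.eigenvalues hP with hμ0def
    set σ := Tuple.sort (fun i => -(μ0 i)) with hσdef
    refine ⟨fun i => ((b0 (σ i)) : V), fun i => μ0 (σ i), ?_, ?_, ?_, ?_⟩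
    · rw [orthonormal_iff_ite]
      intro i j
      have h1 : ⟪((b0 (σ i)) : V), ((b0 (σ j)) : V)⟫ = ⟪b0 (σ i), b0 (σ j)⟫ := rfl
      rw [h1, orthonormal_iff_ite.mp b0.orthonormal (σ i) (σ j)]
      simp [σ.injective.eq_iff]
    · have h1 : Set.range (fun i => ((b0 (σ i)) : V)) =
          (P.subtype '' Set.range (fun i => b0 (σ i))) := by
        ext x; simp [Set.mem_image]
      have h2 : Set.range (fun i => b0 (σ i)) = Set.range b0 :=
        Function.Surjective.range_comp σ.surjective b0
      rw [h1, h2, ← Submodule.map_span]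
      have h3 : Submodule.span ℝ (Set.range b0) = ⊤ := by
        have := b0.toBasis.span_eq
        rwa [b0.coe_toBasis] at this
      rw [h3, Submodule.map_top, Submodule.range_subtype]
    · intro i j hij
      have := Tuple.monotone_sort (fun i => -(μ0 i)) hij
      simp only [Function.comp] at this
      linarith
    · intro i j
      have hT_e : T (b0 (σ i)) = μ0 (σ i) • b0 (σ i) := hTsym.apply_eigenvectorBasis hP (σ i)
      have h1 : ((Submodule.orthogonalProjectionOnto P (pq ((b0 (σ i)) : V))) : V)
          = μ0 (σ i) • ((b0 (σ i)) : V) := by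
        have h0 : (Submodule.orthogonalProjectionOnto P (pq ((b0 (σ i)) : V))) = T (b0 (σ i)) := rfl
        rw [h0, hT_e]; rfl
      rw [← proj_inner P (pq ((b0 (σ i)) : V)) ((b0 (σ j)) : V) (b0 (σ j)).2, h1,
        inner_smul_left]
      have h4 : ⟪((b0 (σ i)) : V), ((b0 (σ j)) : V)⟫ = ⟪b0 (σ i), b0 (σ j)⟫ := rfl
      rw [h4, orthonormal_iff_ite.mp b0.orthonormal (σ i) (σ j)]
      simp only [starRingEnd_apply, star_trivial]
      by_cases h : i = j
      · simp [h]
      · rw [if_neg (fun hh => h (σ.injective hh)), if_neg h, mul_zero]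
  obtain ⟨e, μ, he_on, hspanP, hμmono, hμ_inner⟩ := stageA
  have he_mem : ∀ i, e i ∈ P := by
    intro i
    rw [← hspanP]
    exact Submodule.subset_span ⟨i, rfl⟩
  have he_inner : ∀ i j, ⟪e i, e j⟫ = if i = j then 1 else 0 := orthonormal_iff_ite.mp he_on
  have hμ_norm : ∀ i, μ i = ‖pq (e i)‖ ^ 2 := by
    intro i
    have h1 : ⟪pq (e i), pq (e i)⟫ = ⟪e i, pq (e i)⟫ :=
      pq_inner (e i) (pq (e i)) (pq_mem _)
    rw [← real_inner_self_eq_norm_sq, h1, real_inner_comm, hμ_inner i i, if_pos rfl]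
  have hμ0' : ∀ i, 0 ≤ μ i := by
    intro i; rw [hμ_norm i]; positivity
  have hμ1 : ∀ i, μ i ≤ 1 := by
    intro i
    have h1 := Submodule.norm_sq_eq_add_norm_sq_projection (e i) Q
    have h2 : ‖e i‖ = 1 := he_on.1 i
    have h3 : ‖(Submodule.orthogonalProjectionOnto Q (e i) : V)‖ = ‖Submodule.orthogonalProjectionOnto Q (e i)‖ := rfl
    rw [hμ_norm i, pq_apply, h3]
    nlinarith [sq_nonneg ‖Submodule.orthogonalProjectionOnto Qᗮ (e i)‖]
  have hpq_e_zero : ∀ i, μ i = 0 → pq (e i) = 0 := by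
    intro i h
    have h2 := hμ_norm i
    rw [h] at h2
    have : ‖pq (e i)‖ = 0 := by nlinarith [norm_nonneg (pq (e i))]
    exact norm_eq_zero.mp this
  have hpq_e_one : ∀ i, μ i = 1 → pq (e i) = e i := by
    intro i h
    have h1 := Submodule.norm_sq_eq_add_norm_sq_projection (e i) Q
    have h2 : ‖e i‖ = 1 := he_on.1 i
    have h3 : ‖(Submodule.orthogonalProjectionOnto Q (e i) : V)‖ = ‖Submodule.orthogonalProjectionOnto Q (e i)‖ := rfl
    have h4 : ‖(Submodule.orthogonalProjectionOnto Q (e i) : V)‖ ^ 2 = 1 := by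
      rw [← pq_apply, ← hμ_norm i, h]
    have h5 : ‖(Submodule.orthogonalProjectionOnto Qᗮ (e i) : V)‖ = 0 := by
      have h6 : ‖(Submodule.orthogonalProjectionOnto Qᗮ (e i) : V)‖ = ‖Submodule.orthogonalProjectionOnto Qᗮ (e i)‖ := rfl
      rw [← h3, ← h6, h2] at h1
      have h9 : ‖(Submodule.orthogonalProjectionOnto Qᗮ (e i) : V)‖ ^ 2 = 0 := by nlinarith
      exact pow_eq_zero_iff (by norm_num : (2:ℕ) ≠ 0) |>.mp h9
    have h7 : ((Submodule.orthogonalProjectionOnto Qᗮ (e i) : V)) = 0 := by simpa using h5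
    have h8 := Submodule.starProjection_add_starProjection_orthogonal (K := Q) (e i)
    change (Submodule.orthogonalProjectionOnto Q (e i) : V) + (Submodule.orthogonalProjectionOnto Qᗮ (e i) : V) = e i at h8
    rw [pq_apply]
    rw [h7, add_zero] at h8
    exact h8
  -- angles
  set c : Fin n → ℝ := fun i => Real.sqrt (μ i) with hcdef
  have hc0 : ∀ i, 0 ≤ c i := fun i => Real.sqrt_nonneg _
  have hc1 : ∀ i, c i ≤ 1 := fun i => Real.sqrt_le_one.mpr (hμ1 i)
  have hc_sq : ∀ i, c i ^ 2 = μ i := fun i => Real.sq_sqrt (hμ0' i)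
  have hcne : ∀ i : Fin n, μ i ≠ 0 → c i ≠ 0 := by
    intro i h hc
    exact h (by rw [← hc_sq i, hc]; ring)
  have hc_zero : ∀ i, μ i = 0 → c i = 0 := by
    intro i h
    have : c i ^ 2 = 0 := by rw [hc_sq i, h]
    exact pow_eq_zero_iff (by norm_num : (2:ℕ) ≠ 0) |>.mp this
  have hc_one : ∀ i, μ i = 1 → c i = 1 := by
    intro i h
    rw [hcdef]; simp only [h, Real.sqrt_one]
  clear_value c
  -- Stage B : orthonormal family spanning Q with prescribed inner products
  have stageB : ∃ f : Fin n → V, (∀ i, f i ∈ Q) ∧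
      (∀ i j, ⟪f i, f j⟫ = if i = j then 1 else 0) ∧
      (∀ i j, ⟪e i, f j⟫ = if i = j then c j else 0) ∧
      (∀ j, μ j = 1 → f j = e j) := by
    set f1 : {i : Fin n // μ i ≠ 0} → V := fun i => (c i.1)⁻¹ • pq (e i.1) with hf1def
    have hf1_mem : ∀ i, f1 i ∈ Q := fun i => Q.smul_mem _ (pq_mem _)
    have hpq_e_eq : ∀ (i : Fin n) (h : μ i ≠ 0), pq (e i) = c i • f1 ⟨i, h⟩ := by
      intro i h
      rw [hf1def]; simp only
      rw [smul_inv_smul₀ (hcne i h)]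
    have hpq_pq : ∀ i j, ⟪pq (e i), pq (e j)⟫ = if i = j then μ i else 0 := by
      intro i j
      rw [pq_inner (e i) (pq (e j)) (pq_mem _), real_inner_comm, hμ_inner j i]
      by_cases h : i = j
      · subst h; simp
      · rw [if_neg (fun hh => h hh.symm), if_neg h]
    have hf1_inner : ∀ i j, ⟪f1 i, f1 j⟫ = if i = j then 1 else 0 := by
      intro i j
      rw [hf1def]; simp only
      rw [inner_smul_left, inner_smul_right, hpq_pq]
      by_cases h : i = j
      · subst h
        simp only [if_pos rfl, Subtype.coe_eta]
        have hci := hcne i.1 i.2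
        simp only [starRingEnd_apply, star_trivial]
        field_simp
        simp only [if_true]
        nlinarith [hc_sq i.1]
      · have h2 : i.1 ≠ j.1 := fun hh => h (Subtype.ext hh)
        rw [if_neg h2, if_neg h]
        simp
    have hef1 : ∀ (i : Fin n) (j), ⟪e i, f1 j⟫ = if i = j.1 then c j.1 else 0 := by
      intro i j
      rw [hf1def]; simp only
      rw [inner_smul_right, ← pq_sym, hμ_inner]
      by_cases h : i = j.1
      · rw [if_pos h, if_pos h, h]
        have := hcne j.1 j.2
        field_simp
        nlinarith [hc_sq j.1]
      · rw [if_neg h, if_neg h]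
        simp
    -- the orthogonal filler inside Q
    set Q0 : Submodule ℝ V := Q ⊓ Pᗮ with hQ0def
    have hQ0_perp_e : ∀ x ∈ Q0, ∀ i, ⟪x, e i⟫ = 0 := by
      intro x hx i
      have h1 := (Submodule.mem_orthogonal P x).mp hx.2 (e i) (he_mem i)
      rw [real_inner_comm]
      exact h1
    have hQ0_perp_f1 : ∀ x ∈ Q0, ∀ j, ⟪x, f1 j⟫ = 0 := by
      intro x hx j
      rw [hf1def]; simp only
      rw [inner_smul_right, ← pq_sym, pq_id x hx.1, hQ0_perp_e x hx j.1, mul_zero]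
    have hQle : Q ≤ Submodule.span ℝ (Set.range f1) ⊔ Q0 := by
      intro q hq
      have key : ∀ i, ⟪e i, q - ∑ j : {i : Fin n // μ i ≠ 0}, ⟪f1 j, q⟫ • f1 j⟫ = 0 := by
        intro i
        rw [inner_sub_right, inner_sum]
        simp_rw [real_inner_smul_right]
        by_cases h : μ i = 0
        · have h1 : ⟪e i, q⟫ = 0 := by
            rw [← pq_id q hq, ← pq_sym, hpq_e_zero i h, inner_zero_left]
          have h2 : ∀ j : {i : Fin n // μ i ≠ 0}, ⟪f1 j, q⟫ * ⟪e i, f1 j⟫ = 0 := by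
            intro j
            rw [hef1, if_neg (fun hh => j.2 (by rw [← hh]; exact h)), mul_zero]
          rw [h1, Finset.sum_congr rfl (fun j _ => h2 j), Finset.sum_const_zero, sub_zero]
        · have h1 : ⟪e i, q⟫ = c i * ⟪f1 ⟨i, h⟩, q⟫ := by
            rw [← pq_id q hq, ← pq_sym, hpq_e_eq i h, inner_smul_left]
            simp only [starRingEnd_apply, star_trivial]
            rw [pq_id q hq]
          have h2 : ∑ j : {i : Fin n // μ i ≠ 0}, ⟪f1 j, q⟫ * ⟪e i, f1 j⟫
              = ⟪f1 ⟨i, h⟩, q⟫ * c i := by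
            rw [Finset.sum_eq_single (⟨i, h⟩ : {i : Fin n // μ i ≠ 0})]
            · rw [hef1, if_pos rfl]
            · intro j _ hj
              rw [hef1, if_neg (fun hh => hj (Subtype.ext hh.symm)), mul_zero]
            · intro hh
              exact absurd (Finset.mem_univ _) hh
          rw [h1, h2]
          ring
      have hmem : q - ∑ j : {i : Fin n // μ i ≠ 0}, ⟪f1 j, q⟫ • f1 j ∈ Q0 := by
        refine Submodule.mem_inf.mpr ⟨?_, ?_⟩
        · exact Q.sub_mem hq (Submodule.sum_mem _ fun j _ => Q.smul_mem _ (hf1_mem j))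
        · rw [Submodule.mem_orthogonal]
          intro u hu
          rw [← hspanP] at hu
          have h3 : Set.range e ⊆
              ((ℝ ∙ (q - ∑ j : {i : Fin n // μ i ≠ 0}, ⟪f1 j, q⟫ • f1 j))ᗮ : Set V) := by
            rintro x ⟨i, rfl⟩
            refine Submodule.mem_orthogonal_singleton_iff_inner_right.mpr ?_
            rw [real_inner_comm]
            exact key i
          have h4 := Submodule.span_le.mpr h3 hu
          exact Submodule.mem_orthogonal_singleton_iff_inner_left.mp h4
      have : q = (∑ j : {i : Fin n // μ i ≠ 0}, ⟪f1 j, q⟫ • f1 j)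
          + (q - ∑ j : {i : Fin n // μ i ≠ 0}, ⟪f1 j, q⟫ • f1 j) := by abel
      rw [this]
      refine Submodule.add_mem _ (Submodule.mem_sup_left ?_) (Submodule.mem_sup_right hmem)
      exact Submodule.sum_mem _ fun j _ =>
        Submodule.smul_mem _ _ (Submodule.subset_span ⟨j, rfl⟩)
    have hkcard : Module.finrank ℝ Q0 + Fintype.card {i : Fin n // μ i ≠ 0} ≥ n := by
      have h1 : Module.finrank ℝ Q ≤
          Module.finrank ℝ (Submodule.span ℝ (Set.range f1) ⊔ Q0 : Submodule ℝ V) :=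
        Submodule.finrank_mono hQle
      have h2 := Submodule.finrank_add_le_finrank_add_finrank
        (Submodule.span ℝ (Set.range f1)) Q0
      have h3 : Module.finrank ℝ (Submodule.span ℝ (Set.range f1)) ≤
          Fintype.card {i : Fin n // μ i ≠ 0} := finrank_range_le_card f1
      omega
    have hcard0 : Fintype.card {i : Fin n // μ i = 0} ≤ Module.finrank ℝ Q0 := by
      have h1 : Fintype.card {i : Fin n // μ i = 0}
          = n - Fintype.card {i : Fin n // μ i ≠ 0} := by
        have h2 := Fintype.card_subtype_compl (fun i : Fin n => μ i ≠ 0)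
        have h3 : Fintype.card {i : Fin n // ¬ μ i ≠ 0} = Fintype.card {i : Fin n // μ i = 0} :=
          Fintype.card_congr (Equiv.subtypeEquivRight (by intro x; tauto))
        rw [h3] at h2
        simpa using h2
      have h4 : Fintype.card {i : Fin n // μ i ≠ 0} ≤ n := by
        have := Fintype.card_subtype_le (fun i : Fin n => μ i ≠ 0)
        simpa using this
      omega
    obtain ⟨emb1⟩ : Nonempty ({i : Fin n // μ i = 0} ↪ Fin (Module.finrank ℝ Q0)) := by
      apply Function.Embedding.nonempty_of_card_le
      simpa using hcard0
    set g1 : {i : Fin n // μ i = 0} → V := fun i => ((stdOrthonormalBasis ℝ Q0 (emb1 i)) : V)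
      with hg1def
    have hg1_mem : ∀ i, g1 i ∈ Q0 := fun i => (stdOrthonormalBasis ℝ Q0 (emb1 i)).2
    have hg1_inner : ∀ i j, ⟪g1 i, g1 j⟫ = if i = j then 1 else 0 := by
      intro i j
      have h1 : ⟪g1 i, g1 j⟫
          = ⟪stdOrthonormalBasis ℝ Q0 (emb1 i), stdOrthonormalBasis ℝ Q0 (emb1 j)⟫ := rfl
      rw [h1, orthonormal_iff_ite.mp (stdOrthonormalBasis ℝ Q0).orthonormal]
      simp [emb1.injective.eq_iff]
    refine ⟨fun i => if h : μ i = 0 then g1 ⟨i, h⟩ else f1 ⟨i, h⟩, ?_, ?_, ?_, ?_⟩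
    · intro i
      beta_reduce
      by_cases h : μ i = 0
      · rw [dif_pos h]; exact (hg1_mem _).1
      · rw [dif_neg h]; exact hf1_mem _
    · intro i j
      beta_reduce
      by_cases hi : μ i = 0 <;> by_cases hj : μ j = 0
      · rw [dif_pos hi, dif_pos hj, hg1_inner]
        by_cases h : i = j
        · simp [h]
        · rw [if_neg (fun hh => h (congrArg Subtype.val hh)), if_neg h]
      · rw [dif_pos hi, dif_neg hj, hQ0_perp_f1 _ (hg1_mem _) _,
          if_neg (fun hh : i = j => hj (hh ▸ hi))]
      · rw [dif_neg hi, dif_pos hj, real_inner_comm, hQ0_perp_f1 _ (hg1_mem _) _,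
          if_neg (fun hh : i = j => hi (hh ▸ hj))]
      · rw [dif_neg hi, dif_neg hj, hf1_inner]
        by_cases h : i = j
        · simp [h]
        · rw [if_neg (fun hh => h (congrArg Subtype.val hh)), if_neg h]
    · intro i j
      beta_reduce
      by_cases hj : μ j = 0
      · rw [dif_pos hj, real_inner_comm, hQ0_perp_e _ (hg1_mem _) _, hc_zero j hj]
        simp
      · rw [dif_neg hj, hef1]
    · intro j hj
      beta_reduce
      rw [dif_neg (fun hh : μ j = 0 => one_ne_zero (hh ▸ hj.symm)), hf1def]
      simp only
      rw [hpq_e_one j hj, hc_one j hj]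
      norm_num
  obtain ⟨f, hf_mem, hf_inner, hef, hf_eq_e⟩ := stageB
  have hf_on : Orthonormal ℝ f := orthonormal_iff_ite.mpr hf_inner
  have hQspan : Submodule.span ℝ (Set.range f) = Q := by
    apply Submodule.eq_of_le_of_finrank_le
    · rw [Submodule.span_le]
      rintro x ⟨i, rfl⟩
      exact hf_mem i
    · rw [hQ, finrank_span_eq_card hf_on.linearIndependent]
      simp
  have hs_nonneg : ∀ j, (0:ℝ) ≤ 1 - μ j := fun j => by linarith [hμ1 j]
  have hs_pos : ∀ j, μ j ≠ 1 → (0:ℝ) < 1 - μ j := fun j hj =>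
    lt_of_le_of_ne (by linarith [hμ1 j]) (fun hh => hj (by linarith))
  -- Stage C : completing family
  have stageC : ∃ w : Fin n → V,
      (∀ i j, ⟪e i, w j⟫ = 0) ∧
      (∀ i j, ⟪w i, w j⟫ = if i = j then 1 else 0) ∧
      (∀ j, c j • e j + Real.sqrt (1 - μ j) • w j = f j) := by
    set U : Submodule ℝ V := P ⊔ Q with hUdef
    have heU : ∀ i, e i ∈ U := fun i => Submodule.mem_sup_left (he_mem i)
    have hfU : ∀ i, f i ∈ U := fun i => Submodule.mem_sup_right (hf_mem i)
    set v : {i : Fin n // μ i ≠ 1} → V :=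
      fun j => (Real.sqrt (1 - μ j.1))⁻¹ • (f j.1 - c j.1 • e j.1) with hvdef
    have hsne : ∀ (j : Fin n), μ j ≠ 1 → Real.sqrt (1 - μ j) ≠ 0 :=
      fun j hj => (Real.sqrt_pos.mpr (hs_pos j hj)).ne'
    have hvU : ∀ j, v j ∈ U := fun j =>
      U.smul_mem _ (U.sub_mem (hfU j.1) (U.smul_mem _ (heU j.1)))
    have hev : ∀ (i : Fin n) (j), ⟪e i, v j⟫ = 0 := by
      intro i j
      rw [hvdef]; simp only
      rw [inner_smul_right, inner_sub_right, inner_smul_right, hef, he_inner]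
      by_cases h : i = j.1 <;> simp [h]
    have hfv : ∀ (i : Fin n) (j), ⟪f i, v j⟫
        = (Real.sqrt (1 - μ j.1))⁻¹ * ((if i = j.1 then 1 else 0)
            - c j.1 * (if j.1 = i then c i else 0)) := by
      intro i j
      rw [hvdef]; simp only
      rw [inner_smul_right, inner_sub_right, inner_smul_right, hf_inner,
        real_inner_comm, hef]
    have hvv : ∀ i j, ⟪v i, v j⟫ = if i = j then 1 else 0 := by
      intro i j
      have h1 : ⟪v i, v j⟫ = (Real.sqrt (1 - μ i.1))⁻¹ * (⟪f i.1, v j⟫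
          - c i.1 * ⟪e i.1, v j⟫) := by
        rw [hvdef]; simp only
        rw [inner_smul_left, inner_sub_left, inner_smul_left]
        simp only [starRingEnd_apply, star_trivial]
      rw [h1, hev, hfv]
      by_cases h : i = j
      · subst h
        rw [if_pos rfl, if_pos rfl, if_pos rfl]
        have h2 := hsne i.1 i.2
        have h3 := Real.sq_sqrt (hs_nonneg i.1)
        have h4 := hc_sq i.1
        field_simp
        nlinarith [h3, h4]
      · have h2 : i.1 ≠ j.1 := fun hh => h (Subtype.ext hh)
        rw [if_neg h2, if_neg (fun hh => h2 hh.symm), if_neg h]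
        ring
    -- dim count for Uᗮ
    have hUspan : U ≤ Submodule.span ℝ
        (Set.range (Sum.elim e (fun j : {i : Fin n // μ i ≠ 1} => f j.1))) := by
      rw [hUdef]
      apply sup_le
      · rw [← hspanP]
        apply Submodule.span_mono
        rintro x ⟨i, rfl⟩
        exact ⟨Sum.inl i, rfl⟩
      · rw [← hQspan, Submodule.span_le]
        rintro x ⟨i, rfl⟩
        by_cases h : μ i = 1
        · rw [hf_eq_e i h]
          exact Submodule.subset_span ⟨Sum.inl i, rfl⟩
        · exact Submodule.subset_span ⟨Sum.inr ⟨i, h⟩, rfl⟩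
    have hcardU : Module.finrank ℝ U ≤ n + Fintype.card {i : Fin n // μ i ≠ 1} := by
      have h1 : Module.finrank ℝ (Submodule.span ℝ
          (Set.range (Sum.elim e (fun j : {i : Fin n // μ i ≠ 1} => f j.1))))
          ≤ Fintype.card (Fin n ⊕ {i : Fin n // μ i ≠ 1}) :=
        finrank_range_le_card _
      have h2 := Submodule.finrank_mono hUspan
      simp only [Fintype.card_sum, Fintype.card_fin] at h1
      omega
    have hcard1 : Fintype.card {i : Fin n // μ i = 1} ≤ Module.finrank ℝ Uᗮ := by
      have h1 := Submodule.finrank_add_finrank_orthogonal U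
      rw [hVrank] at h1
      have h2 := Fintype.card_subtype_compl (fun i : Fin n => μ i ≠ 1)
      have h3 : Fintype.card {i : Fin n // ¬ μ i ≠ 1} = Fintype.card {i : Fin n // μ i = 1} :=
        Fintype.card_congr (Equiv.subtypeEquivRight (by intro x; tauto))
      have h4 : Fintype.card {i : Fin n // μ i ≠ 1} ≤ n := by
        have := Fintype.card_subtype_le (fun i : Fin n => μ i ≠ 1)
        simpa using this
      rw [h3] at h2
      simp only [Fintype.card_fin] at h2
      omega
    obtain ⟨emb2⟩ : Nonempty ({i : Fin n // μ i = 1} ↪ Fin (Module.finrank ℝ Uᗮ)) := by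
      apply Function.Embedding.nonempty_of_card_le
      simpa using hcard1
    set g2 : {i : Fin n // μ i = 1} → V := fun i => ((stdOrthonormalBasis ℝ Uᗮ (emb2 i)) : V)
      with hg2def
    have hg2_perp : ∀ i, ∀ x ∈ U, ⟪x, g2 i⟫ = 0 := by
      intro i x hx
      exact (Submodule.mem_orthogonal U (g2 i)).mp (stdOrthonormalBasis ℝ Uᗮ (emb2 i)).2 x hx
    have hg2_inner : ∀ i j, ⟪g2 i, g2 j⟫ = if i = j then 1 else 0 := by
      intro i j
      have h1 : ⟪g2 i, g2 j⟫
          = ⟪stdOrthonormalBasis ℝ Uᗮ (emb2 i), stdOrthonormalBasis ℝ Uᗮ (emb2 j)⟫ := rfl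
      rw [h1, orthonormal_iff_ite.mp (stdOrthonormalBasis ℝ Uᗮ).orthonormal]
      simp [emb2.injective.eq_iff]
    refine ⟨fun i => if h : μ i = 1 then g2 ⟨i, h⟩ else v ⟨i, h⟩, ?_, ?_, ?_⟩
    · intro i j
      beta_reduce
      by_cases h : μ j = 1
      · rw [dif_pos h]
        exact hg2_perp _ _ (heU i)
      · rw [dif_neg h]
        exact hev i ⟨j, h⟩
    · intro i j
      beta_reduce
      by_cases hi : μ i = 1 <;> by_cases hj : μ j = 1
      · rw [dif_pos hi, dif_pos hj, hg2_inner]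
        by_cases h : i = j
        · simp [h]
        · rw [if_neg (fun hh => h (congrArg Subtype.val hh)), if_neg h]
      · rw [dif_pos hi, dif_neg hj, real_inner_comm, hg2_perp _ _ (hvU _),
          if_neg (fun hh : i = j => hj (hh ▸ hi))]
      · rw [dif_neg hi, dif_pos hj, hg2_perp _ _ (hvU _),
          if_neg (fun hh : i = j => hi (hh ▸ hj))]
      · rw [dif_neg hi, dif_neg hj, hvv]
        by_cases h : i = j
        · simp [h]
        · rw [if_neg (fun hh => h (congrArg Subtype.val hh)), if_neg h]
    · intro j
      beta_reduce
      by_cases h : μ j = 1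
      · rw [dif_pos h, hc_one j h, h, sub_self, Real.sqrt_zero, zero_smul, add_zero,
          one_smul, hf_eq_e j h]
      · rw [dif_neg h, hvdef]
        simp only
        rw [smul_smul, mul_inv_cancel₀ (hsne j h), one_smul]
        abel
  obtain ⟨w, hew, hww, hcw⟩ := stageC
  set θ : Fin n → ℝ := fun i => Real.arccos (c i) with hθdef
  have hθ0 : ∀ i, 0 ≤ θ i := fun i => Real.arccos_nonneg _
  have hθpi : ∀ i, θ i ≤ π := fun i => Real.arccos_le_pi _
  have hθhalf : ∀ i, θ i ≤ π / 2 := fun i => Real.arccos_le_pi_div_two.mpr (hc0 i)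
  have hcmono : ∀ i j : Fin n, i ≤ j → c j ≤ c i := by
    intro i j hij
    rw [hcdef]
    exact Real.sqrt_le_sqrt (hμmono i j hij)
  have hθmono : ∀ i j : Fin n, i ≤ j → θ i ≤ θ j := by
    intro i j hij
    rw [hθdef]
    simp only [Real.arccos]
    have := Real.monotone_arcsin (hcmono i j hij)
    linarith
  have hcosθ : ∀ i, Real.cos (θ i) = c i := fun i =>
    Real.cos_arccos (by linarith [hc0 i]) (hc1 i)
  have hsinθ : ∀ i, Real.sin (θ i) = Real.sqrt (1 - μ i) := by
    intro i
    rw [hθdef]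
    simp only
    rw [Real.sin_arccos, hc_sq]
  set E : Fin (2 * n) → V :=
    fun k => if h : (k : ℕ) < n then e ⟨k, h⟩
      else w ⟨(k : ℕ) - n, by have := k.isLt; omega⟩ with hEdef
  have hE1 : ∀ (k : Fin (2 * n)) (h : (k : ℕ) < n), E k = e ⟨k, h⟩ := by
    intro k h
    rw [hEdef]
    simp only
    rw [dif_pos h]
  have hE2 : ∀ (k : Fin (2 * n)) (h : ¬ (k : ℕ) < n),
      E k = w ⟨(k : ℕ) - n, by have := k.isLt; omega⟩ := by
    intro k h
    rw [hEdef]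
    simp only
    rw [dif_neg h]
  have hE_inner : ∀ k l, ⟪E k, E l⟫ = if k = l then 1 else 0 := by
    intro k l
    by_cases hk : (k : ℕ) < n <;> by_cases hl : (l : ℕ) < n
    · rw [hE1 k hk, hE1 l hl, he_inner]
      by_cases h : k = l
      · subst h; simp
      · rw [if_neg ?_, if_neg h]
        intro hh
        have h2 := congrArg Fin.val hh
        simp only at h2
        exact h (Fin.ext h2)
    · rw [hE1 k hk, hE2 l hl, hew, if_neg (fun hh : k = l => hl (hh ▸ hk))]
    · rw [hE2 k hk, hE1 l hl, real_inner_comm, hew,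
        if_neg (fun hh : k = l => hk (hh ▸ hl))]
    · rw [hE2 k hk, hE2 l hl, hww]
      by_cases h : k = l
      · subst h; simp
      · rw [if_neg ?_, if_neg h]
        intro hh
        have h2 := congrArg Fin.val hh
        simp only at h2
        have h3 := k.isLt
        have h4 := l.isLt
        exact h (Fin.ext (by omega))
  haveI : Nonempty (Fin (2 * n)) := ⟨⟨0, by omega⟩⟩
  have hE_on : Orthonormal ℝ E := orthonormal_iff_ite.mpr hE_inner
  have hE_span : Submodule.span ℝ (Set.range E) = ⊤ := by
    apply LinearIndependent.span_eq_top_of_card_eq_finrank hE_on.linearIndependent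
    simp [hVrank]
  refine ⟨E, θ, hE_on, hE_span, fun j => ⟨hθ0 j, hθpi j⟩,
    fun i j hij _ => hθmono i j hij, ?_, ?_, ?_⟩
  · intro j hj
    refine ⟨hθhalf j, hθmono j ⟨n - 1, by omega⟩ ?_, ?_⟩
    · rw [Fin.le_def]
      simp only
      omega
    · have h1 := hθhalf j
      have h2 := hθhalf ⟨n - 1, by omega⟩
      linarith
  · have hfe : ∀ (j : Fin n) (p : (j : ℕ) < 2 * n), E ⟨(j : ℕ), p⟩ = e j :=
      fun j p => hE1 _ j.isLt
    refine Eq.trans hspanP.symm (congrArg (Submodule.span ℝ) ?_)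
    ext x
    simp only [Set.mem_range]
    constructor
    · rintro ⟨j, rfl⟩
      exact ⟨j, hfe j (by have := j.isLt; omega)⟩
    · rintro ⟨j, rfl⟩
      exact ⟨j, (hfe j (by have := j.isLt; omega)).symm⟩
  · have key : ∀ (j : Fin n) (p1 : (j : ℕ) < 2 * n) (p2 : n + (j : ℕ) < 2 * n),
        Real.cos (θ j) • E ⟨(j : ℕ), p1⟩ + Real.sin (θ j) • E ⟨n + (j : ℕ), p2⟩ = f j := by
      intro j p1 p2
      have q2 : ¬ (((⟨n + (j : ℕ), p2⟩ : Fin (2 * n)) : ℕ) < n) := by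
        simp only
        omega
      rw [hE1 _ j.isLt, hE2 _ q2, hcosθ, hsinθ]
      have harg : (⟨((⟨n + (j : ℕ), p2⟩ : Fin (2 * n)) : ℕ) - n,
          by have := j.isLt; simp only; omega⟩ : Fin n) = j := by
        apply Fin.ext
        simp only
        omega
      rw [harg]
      exact hcw j
    refine Eq.trans hQspan.symm (congrArg (Submodule.span ℝ) ?_)
    ext x
    simp only [Set.mem_range]
    constructor
    · rintro ⟨j, rfl⟩
      exact ⟨j, key j (by have := j.isLt; omega) (by have := j.isLt; omega)⟩
    · rintro ⟨j, rfl⟩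
      exact ⟨j, (key j (by have := j.isLt; omega) (by have := j.isLt; omega)).symm⟩
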